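/- arXiv:1804.07087 — 2 statements merged into one kernel-verified Lean document; each statement's English description precedes it below -/
import Mathlib

section
/- The reverse-complement map π ↦ (π^r)^c is a bijection from the set of ordered set partitions of [n] word-avoiding a pattern α to the set of ordered set partitions of [n] word-avoiding the reverse-complement pattern (α^r)^c, and it preserves the number of blocks, the number of word-descents des, and the number of part-descents pdes. -/
/-- The word of an ordered set partition: concatenate the blocks,
listing the elements of each block in increasing order. -/
def word (π : List (Finset ℕ)) : List ℕ :=
  (π.map (fun B : Finset ℕ => Finset.sort B (· ≤ ·))).flatten

/-- `π` is an ordered set partition of `[n] = {1,…,n}`: a list of nonempty,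
pairwise disjoint finsets whose union is `{1,…,n}`. -/
def IsOSP (n : ℕ) (π : List (Finset ℕ)) : Prop :=
  (∀ B ∈ π, B.Nonempty) ∧ π.Pairwise Disjoint ∧
    π.foldr (· ∪ ·) ∅ = Finset.Icc 1 n

noncomputable def minB (B : Finset ℕ) : ℕ := sInf (B : Set ℕ)
def maxB (B : Finset ℕ) : ℕ := B.sup id

/-- number of descents of a word -/
def desCount (w : List ℕ) : ℕ :=
  ((List.range (w.length - 1)).filter (fun i => w.getD (i + 1) 0 < w.getD i 0)).length

noncomputable def mindes (π : List (Finset ℕ)) : ℕ :=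
  ((List.range (π.length - 1)).filter
    (fun i => minB (π.getD (i + 1) ∅) < minB (π.getD i ∅))).length

def maxdes (π : List (Finset ℕ)) : ℕ :=
  ((List.range (π.length - 1)).filter
    (fun i => maxB (π.getD (i + 1) ∅) < maxB (π.getD i ∅))).length

noncomputable def pdes (π : List (Finset ℕ)) : ℕ :=
  ((List.range (π.length - 1)).filter
    (fun i => maxB (π.getD (i + 1) ∅) < minB (π.getD i ∅))).length

def Avoids12 (w : List ℕ) : Prop :=
  ¬ ∃ i j : ℕ, i < j ∧ j < w.length ∧ w.getD i 0 < w.getD j 0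

def Avoids21 (w : List ℕ) : Prop :=
  ¬ ∃ i j : ℕ, i < j ∧ j < w.length ∧ w.getD j 0 < w.getD i 0

def Avoids123 (w : List ℕ) : Prop :=
  ¬ ∃ i j k : ℕ, i < j ∧ j < k ∧ k < w.length ∧
    w.getD i 0 < w.getD j 0 ∧ w.getD j 0 < w.getD k 0

def Avoids132 (w : List ℕ) : Prop :=
  ¬ ∃ i j k : ℕ, i < j ∧ j < k ∧ k < w.length ∧
    w.getD i 0 < w.getD k 0 ∧ w.getD k 0 < w.getD j 0

def Avoids213 (w : List ℕ) : Prop :=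
  ¬ ∃ i j k : ℕ, i < j ∧ j < k ∧ k < w.length ∧
    w.getD j 0 < w.getD i 0 ∧ w.getD i 0 < w.getD k 0

def Avoids312 (w : List ℕ) : Prop :=
  ¬ ∃ i j k : ℕ, i < j ∧ j < k ∧ k < w.length ∧
    w.getD j 0 < w.getD k 0 ∧ w.getD k 0 < w.getD i 0

def Avoids321 (w : List ℕ) : Prop :=
  ¬ ∃ i j k : ℕ, i < j ∧ j < k ∧ k < w.length ∧
    w.getD k 0 < w.getD j 0 ∧ w.getD j 0 < w.getD i 0

/-- reverse-complement of an ordered set partition of `[n]` -/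
def rcomp (n : ℕ) (π : List (Finset ℕ)) : List (Finset ℕ) :=
  (π.map (fun B => B.image (fun a => n + 1 - a))).reverse

/-- `u` is order isomorphic to `p` (both lists of distinct entries). -/
def OrdIso (u p : List ℕ) : Prop :=
  u.length = p.length ∧ ∀ i j : ℕ, i < u.length → j < u.length →
    (u.getD i 0 < u.getD j 0 ↔ p.getD i 0 < p.getD j 0)

/-- `π` word-avoids the pattern `p`. -/
def WordAvoids (p : List ℕ) (π : List (Finset ℕ)) : Prop :=
  ¬ ∃ u : List ℕ, u.Sublist (word π) ∧ OrdIso u p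

/-- reverse-complement of a permutation pattern given as a list of values in `{1,…,m}`. -/
def patRC (p : List ℕ) : List ℕ := (p.map (fun a => p.length + 1 - a)).reverse

section Aux
open List Finset

/-- counting a predicate over `range m` is invariant under `i ↦ m-1-i`. -/
lemma length_filter_range_rev (m : ℕ) (p q : ℕ → Bool)
    (h : ∀ i < m, p i = q (m - 1 - i)) :
    ((List.range m).filter p).length = ((List.range m).filter q).length := by
  rw [← List.countP_eq_length_filter, ← List.countP_eq_length_filter]
  have hperm : ((List.range m).map (fun i => m - 1 - i)).Perm (List.range m) := by
    have h0 : (List.range m).reverse = List.map (fun i => m - 1 - i) (List.range m) := by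
      conv_lhs => rw [List.range_eq_range']
      rw [List.reverse_range']
      simp only [Nat.zero_add]
    rw [← h0]
    exact List.reverse_perm _
  have h1 : List.countP q (List.range m) =
      List.countP q ((List.range m).map (fun i => m - 1 - i)) :=
    (hperm.countP_eq q).symm
  rw [h1, List.countP_map]
  apply List.countP_congr
  intro i hi
  simp only [List.mem_range] at hi
  simp [h i hi]

lemma sort_image (n : ℕ) (B : Finset ℕ) (hB : ∀ a ∈ B, a ≤ n) :
    Finset.sort (B.image (fun a => n + 1 - a)) (· ≤ ·) =
      ((Finset.sort B (· ≤ ·)).map (fun a => n + 1 - a)).reverse := by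
  have hinj : Set.InjOn (fun a => n + 1 - a) ↑B := by
    intro a ha b hb hab
    have := hB a ha; have := hB b hb
    simp only at hab; omega
  refine (fun h1 h2 h3 => List.Perm.eq_of_pairwise' (r := (· ≤ ·)) h2 h3 h1) ?_ ?_ ?_
  · rw [← Multiset.coe_eq_coe]
    have e1 : ((Finset.sort (B.image (fun a => n + 1 - a)) (· ≤ ·)) : Multiset ℕ)
        = (B.image (fun a => n + 1 - a)).val := Finset.sort_eq _ _
    have e2 : ((Finset.sort B (· ≤ ·)) : Multiset ℕ) = B.val := Finset.sort_eq _ _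
    rw [e1, Finset.image_val_of_injOn hinj]
    rw [Multiset.coe_reverse, ← e2, Multiset.map_coe]
  · exact Finset.pairwise_sort _ _
  · rw [List.pairwise_reverse, List.pairwise_map]
    have := (Finset.sortedLT_sort B).pairwise
    exact this.imp (fun hab => Nat.sub_le_sub_left (Nat.le_of_lt hab) _)

lemma word_rcomp (n : ℕ) (π : List (Finset ℕ)) (hπ : ∀ B ∈ π, ∀ a ∈ B, a ≤ n) :
    word (rcomp n π) = ((word π).map (fun a => n + 1 - a)).reverse := by
  unfold word rcomp
  rw [List.map_reverse, List.flatten_reverse, List.map_map, List.map_flatten,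
    List.map_map]
  congr 1
  rw [List.map_map]
  apply congrArg List.flatten
  apply List.map_congr_left
  intro B hB
  simp only [Function.comp]
  rw [sort_image n B (hπ B hB)]
  simp

lemma getD_rev_map (f : ℕ → ℕ) (w : List ℕ) {i : ℕ} (hi : i < w.length) :
    ((w.map f).reverse).getD i 0 = f (w.getD (w.length - 1 - i) 0) := by
  have h1 : i < ((w.map f).reverse).length := by simpa using hi
  have h2 : w.length - 1 - i < w.length := by omega
  rw [List.getD_eq_getElem _ _ h1, List.getD_eq_getElem _ _ h2,
    List.getElem_reverse, List.getElem_map]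
  congr 1
  simp

lemma mem_getD {w : List ℕ} {i : ℕ} (hi : i < w.length) : w.getD i 0 ∈ w := by
  rw [List.getD_eq_getElem _ _ hi]
  exact List.getElem_mem _

lemma desCount_rc (n : ℕ) (w : List ℕ) (hw : ∀ a ∈ w, a ≤ n) :
    desCount ((w.map (fun a => n + 1 - a)).reverse) = desCount w := by
  unfold desCount
  simp only [List.length_reverse, List.length_map]
  apply length_filter_range_rev
  intro i hi
  have hL : 2 ≤ w.length := by omega
  have hi1 : i + 1 < w.length := by omega
  have hi0 : i < w.length := by omega
  rw [getD_rev_map _ _ hi1, getD_rev_map _ _ hi0]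
  have e1 : w.length - 1 - (i + 1) = w.length - 2 - i := by omega
  have e2 : w.length - 1 - i = (w.length - 1 - 1 - i) + 1 := by omega
  rw [e1, e2]
  have hb : w.getD ((w.length - 1 - 1 - i) + 1) 0 ≤ n :=
    hw _ (mem_getD (by omega))
  have ha : w.getD (w.length - 2 - i) 0 ≤ n :=
    hw _ (mem_getD (by omega))
  have e3 : w.length - 2 - i = w.length - 1 - 1 - i := by omega
  rw [e3]
  simp only [decide_eq_decide]
  omega

end Aux
section Aux2
open List Finset

lemma minB_mem {B : Finset ℕ} (h : B.Nonempty) : minB B ∈ B := by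
  have : (B : Set ℕ).Nonempty := by exact_mod_cast h
  exact_mod_cast Nat.sInf_mem this

lemma minB_le {B : Finset ℕ} {a : ℕ} (h : a ∈ B) : minB B ≤ a :=
  Nat.sInf_le (by exact_mod_cast h)

lemma maxB_mem {B : Finset ℕ} (h : B.Nonempty) : maxB B ∈ B := by
  obtain ⟨i, hi, he⟩ := Finset.exists_mem_eq_sup B h id
  unfold maxB; rw [he]; exact hi

lemma le_maxB {B : Finset ℕ} {a : ℕ} (h : a ∈ B) : a ≤ maxB B :=
  Finset.le_sup (f := id) h

lemma minB_image (n : ℕ) {B : Finset ℕ} (hB : B.Nonempty) :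
    minB (B.image (fun a => n + 1 - a)) = n + 1 - maxB B := by
  apply Nat.le_antisymm
  · exact minB_le (Finset.mem_image_of_mem _ (maxB_mem hB))
  · obtain ⟨b, hb, he⟩ := Finset.mem_image.1 (minB_mem (hB.image _))
    rw [← he]
    exact Nat.sub_le_sub_left (le_maxB hb) _

lemma maxB_image (n : ℕ) {B : Finset ℕ} (hB : B.Nonempty) :
    maxB (B.image (fun a => n + 1 - a)) = n + 1 - minB B := by
  apply Nat.le_antisymm
  · obtain ⟨b, hb, he⟩ := Finset.mem_image.1 (maxB_mem (hB.image _))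
    rw [← he]
    exact Nat.sub_le_sub_left (minB_le hb) _
  · exact le_maxB (Finset.mem_image_of_mem _ (minB_mem hB))

lemma subset_foldr_union {B : Finset ℕ} {l : List (Finset ℕ)} (h : B ∈ l) :
    B ⊆ l.foldr (· ∪ ·) ∅ := by
  induction l with
  | nil => simp at h
  | cons C l ih =>
    rcases List.mem_cons.1 h with h | h
    · subst h; exact Finset.subset_union_left
    · exact (ih h).trans Finset.subset_union_right

lemma mem_of_osp {n : ℕ} {π : List (Finset ℕ)} (h : IsOSP n π) {B : Finset ℕ}
    (hB : B ∈ π) {a : ℕ} (ha : a ∈ B) : a ∈ Finset.Icc 1 n := by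
  have := subset_foldr_union hB ha
  rwa [h.2.2] at this

lemma foldr_union_init (l : List (Finset ℕ)) (s : Finset ℕ) :
    l.foldr (· ∪ ·) s = l.foldr (· ∪ ·) ∅ ∪ s := by
  induction l with
  | nil => simp
  | cons C l ih => simp [ih, Finset.union_assoc]

lemma foldr_union_reverse (l : List (Finset ℕ)) :
    l.reverse.foldr (· ∪ ·) ∅ = l.foldr (· ∪ ·) ∅ := by
  induction l with
  | nil => simp
  | cons C l ih =>
    simp only [List.reverse_cons, List.foldr_append, List.foldr_cons, List.foldr_nil,
      Finset.union_empty]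
    rw [foldr_union_init l.reverse C, ih]
    exact Finset.union_comm _ _

lemma foldr_union_map_image (f : ℕ → ℕ) (l : List (Finset ℕ)) :
    (l.map (Finset.image f)).foldr (· ∪ ·) ∅ = Finset.image f (l.foldr (· ∪ ·) ∅) := by
  induction l with
  | nil => simp
  | cons C l ih => simp [ih, Finset.image_union]

lemma isOSP_rcomp {n : ℕ} {π : List (Finset ℕ)} (h : IsOSP n π) :
    IsOSP n (rcomp n π) := by
  obtain ⟨hne, hdisj, huni⟩ := h
  refine ⟨?_, ?_, ?_⟩
  · intro B hB
    rw [rcomp, List.mem_reverse, List.mem_map] at hB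
    obtain ⟨C, hC, rfl⟩ := hB
    exact (hne C hC).image _
  · rw [rcomp, List.pairwise_reverse, List.pairwise_map]
    refine List.Pairwise.imp_of_mem ?_ hdisj
    intro A B hA hB hAB
    rw [Finset.disjoint_left]
    rintro x hxB hxA
    obtain ⟨b, hb, rfl⟩ := Finset.mem_image.1 hxB
    obtain ⟨a, ha, he⟩ := Finset.mem_image.1 hxA
    have hb' := mem_of_osp ⟨hne, hdisj, huni⟩ hB hb
    have ha' := mem_of_osp ⟨hne, hdisj, huni⟩ hA ha
    simp only [Finset.mem_Icc] at hb' ha'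
    have : a = b := by omega
    subst this
    exact (Finset.disjoint_left.1 hAB ha) hb
  · rw [rcomp, foldr_union_reverse, foldr_union_map_image, huni]
    ext x
    simp only [Finset.mem_image, Finset.mem_Icc]
    constructor
    · rintro ⟨a, ha, rfl⟩; omega
    · rintro hx; exact ⟨n + 1 - x, by omega, by omega⟩

lemma rcomp_rcomp {n : ℕ} {π : List (Finset ℕ)} (h : IsOSP n π) :
    rcomp n (rcomp n π) = π := by
  unfold rcomp
  rw [List.map_reverse, List.reverse_reverse, List.map_map]
  conv_rhs => rw [← List.map_id π]
  apply List.map_congr_left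
  intro B hB
  simp only [Function.comp, id]
  rw [Finset.image_image]
  rw [show (fun a => n + 1 - a) ∘ (fun a => n + 1 - a) = fun a => n + 1 - (n + 1 - a) from rfl]
  have : ∀ a ∈ B, n + 1 - (n + 1 - a) = id a := by
    intro a ha
    have := mem_of_osp h hB ha
    simp only [Finset.mem_Icc] at this
    simp only [id]; omega
  rw [Finset.image_congr this, Finset.image_id]

lemma getD_rcomp (n : ℕ) (π : List (Finset ℕ)) {i : ℕ} (hi : i < π.length) :
    (rcomp n π).getD i ∅ = (π.getD (π.length - 1 - i) ∅).image (fun a => n + 1 - a) := by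
  have h1 : i < (rcomp n π).length := by simp [rcomp]; omega
  have h2 : π.length - 1 - i < π.length := by omega
  rw [List.getD_eq_getElem _ _ h1, List.getD_eq_getElem _ _ h2]
  simp only [rcomp]
  rw [List.getElem_reverse, List.getElem_map]
  congr 2
  simp

lemma pdes_rcomp {n : ℕ} {π : List (Finset ℕ)} (h : IsOSP n π) :
    pdes (rcomp n π) = pdes π := by
  unfold pdes
  have hlen : (rcomp n π).length = π.length := by simp [rcomp]
  rw [hlen]
  apply length_filter_range_rev
  intro i hi
  have hi1 : i + 1 < π.length := by omega
  have hi0 : i < π.length := by omega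
  rw [getD_rcomp n π hi1, getD_rcomp n π hi0]
  have hj1 : π.length - 1 - (i + 1) < π.length := by omega
  have hj0 : π.length - 1 - i < π.length := by omega
  have hmem1 : π.getD (π.length - 1 - (i + 1)) ∅ ∈ π := by
    rw [List.getD_eq_getElem _ _ hj1]; exact List.getElem_mem _
  have hmem0 : π.getD (π.length - 1 - i) ∅ ∈ π := by
    rw [List.getD_eq_getElem _ _ hj0]; exact List.getElem_mem _
  have hne1 : (π.getD (π.length - 1 - (i + 1)) ∅).Nonempty := h.1 _ hmem1
  have hne0 : (π.getD (π.length - 1 - i) ∅).Nonempty := h.1 _ hmem0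
  rw [maxB_image n hne1, minB_image n hne0]
  have hb1 : minB (π.getD (π.length - 1 - (i + 1)) ∅) ∈ Finset.Icc 1 n :=
    mem_of_osp h hmem1 (minB_mem hne1)
  have hb0 : maxB (π.getD (π.length - 1 - i) ∅) ∈ Finset.Icc 1 n :=
    mem_of_osp h hmem0 (maxB_mem hne0)
  simp only [Finset.mem_Icc] at hb1 hb0
  have e1 : π.length - 1 - (i + 1) = π.length - 2 - i := by omega
  have e2 : π.length - 1 - i = (π.length - 2 - i) + 1 := by omega
  rw [e1, e2]
  rw [e2] at hb0
  rw [e1] at hb1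
  have e3 : π.length - 1 - 1 - i = π.length - 2 - i := by omega
  rw [e3]
  simp only [decide_eq_decide]
  omega

end Aux2
section Aux3
open List Finset

lemma getD_patRC (p : List ℕ) {i : ℕ} (hi : i < p.length) :
    (patRC p).getD i 0 = p.length + 1 - p.getD (p.length - 1 - i) 0 := by
  unfold patRC
  exact getD_rev_map _ _ hi

lemma ordIso_rc_iff (n : ℕ) (v p : List ℕ)
    (hv : ∀ a ∈ v, a ≤ n) (hp : ∀ a ∈ p, a ≤ p.length) :
    OrdIso ((v.map (fun a => n + 1 - a)).reverse) (patRC p) ↔ OrdIso v p := by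
  unfold OrdIso
  have hlu : ((v.map (fun a => n + 1 - a)).reverse).length = v.length := by simp
  have hlp : (patRC p).length = p.length := by simp [patRC]
  rw [hlu, hlp]
  constructor
  · rintro ⟨hlen, hcond⟩
    refine ⟨hlen, ?_⟩
    intro i j hi hj
    have h1 := hcond (v.length - 1 - j) (v.length - 1 - i) (by omega) (by omega)
    rw [getD_rev_map _ _ (show v.length - 1 - j < v.length by omega),
        getD_rev_map _ _ (show v.length - 1 - i < v.length by omega),
        getD_patRC _ (show v.length - 1 - j < p.length by omega),
        getD_patRC _ (show v.length - 1 - i < p.length by omega)] at h1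
    have e1 : v.length - 1 - (v.length - 1 - j) = j := by omega
    have e2 : v.length - 1 - (v.length - 1 - i) = i := by omega
    have e3 : p.length - 1 - (v.length - 1 - j) = j := by omega
    have e4 : p.length - 1 - (v.length - 1 - i) = i := by omega
    rw [e1, e2, e3, e4] at h1
    have b1 : v.getD i 0 ≤ n := hv _ (mem_getD (by omega))
    have b2 : v.getD j 0 ≤ n := hv _ (mem_getD (by omega))
    have b3 : p.getD i 0 ≤ p.length := hp _ (mem_getD (by omega))
    have b4 : p.getD j 0 ≤ p.length := hp _ (mem_getD (by omega))
    omega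
  · rintro ⟨hlen, hcond⟩
    refine ⟨hlen, ?_⟩
    intro i j hi hj
    rw [getD_rev_map _ _ (show i < v.length by omega),
        getD_rev_map _ _ (show j < v.length by omega),
        getD_patRC _ (show i < p.length by omega),
        getD_patRC _ (show j < p.length by omega)]
    have h1 := hcond (v.length - 1 - j) (v.length - 1 - i) (by omega) (by omega)
    have e3 : p.length - 1 - i = v.length - 1 - i := by omega
    have e4 : p.length - 1 - j = v.length - 1 - j := by omega
    rw [e3, e4]
    have b1 : v.getD (v.length - 1 - i) 0 ≤ n := hv _ (mem_getD (by omega))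
    have b2 : v.getD (v.length - 1 - j) 0 ≤ n := hv _ (mem_getD (by omega))
    have b3 : p.getD (v.length - 1 - i) 0 ≤ p.length := hp _ (mem_getD (by omega))
    have b4 : p.getD (v.length - 1 - j) 0 ≤ p.length := hp _ (mem_getD (by omega))
    omega

lemma mem_word_le {n : ℕ} {π : List (Finset ℕ)} (h : IsOSP n π) {a : ℕ}
    (ha : a ∈ word π) : 1 ≤ a ∧ a ≤ n := by
  unfold word at ha
  rw [List.mem_flatten] at ha
  obtain ⟨l, hl, hal⟩ := ha
  rw [List.mem_map] at hl
  obtain ⟨B, hB, rfl⟩ := hl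
  have := mem_of_osp h hB (by rwa [Finset.mem_sort] at hal)
  simpa [Finset.mem_Icc] using this

lemma wordAvoids_rcomp_iff {n : ℕ} {π : List (Finset ℕ)} {α : List ℕ}
    (hπ : IsOSP n π) (hval : ∀ a ∈ α, 1 ≤ a ∧ a ≤ α.length) :
    WordAvoids (patRC α) (rcomp n π) ↔ WordAvoids α π := by
  unfold WordAvoids
  rw [word_rcomp n π (fun B hB a ha => (Finset.mem_Icc.1 (mem_of_osp hπ hB ha)).2)]
  apply not_congr
  constructor
  · rintro ⟨u, hsub, hiso⟩
    rw [List.sublist_reverse_iff, List.sublist_map_iff] at hsub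
    obtain ⟨v, hv, huv⟩ := hsub
    refine ⟨v, hv, ?_⟩
    have hve : ∀ a ∈ v, a ≤ n := fun a ha => (mem_word_le hπ (hv.subset ha)).2
    have hu : u = (v.map (fun a => n + 1 - a)).reverse := by
      rw [← huv, List.reverse_reverse]
    rw [hu] at hiso
    exact (ordIso_rc_iff n v α hve (fun a ha => (hval a ha).2)).1 hiso
  · rintro ⟨v, hv, hiso⟩
    have hve : ∀ a ∈ v, a ≤ n := fun a ha => (mem_word_le hπ (hv.subset ha)).2
    refine ⟨(v.map (fun a => n + 1 - a)).reverse, ?_, ?_⟩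
    · rw [List.sublist_reverse_iff, List.reverse_reverse]
      exact hv.map _
    · exact (ordIso_rc_iff n v α hve (fun a ha => (hval a ha).2)).2 hiso

end Aux3
theorem stmt4 (n : ℕ) (α : List ℕ) (hnd : α.Nodup)
    (hval : ∀ a ∈ α, 1 ≤ a ∧ a ≤ α.length) :
    Set.BijOn (rcomp n) {π | IsOSP n π ∧ WordAvoids α π}
      {π | IsOSP n π ∧ WordAvoids (patRC α) π} ∧
    (∀ π : List (Finset ℕ), IsOSP n π →
      (rcomp n π).length = π.length ∧
      desCount (word (rcomp n π)) = desCount (word π) ∧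
      pdes (rcomp n π) = pdes π) := by
  constructor
  · refine ⟨?_, ?_, ?_⟩
    · rintro π ⟨hosp, hav⟩
      exact ⟨isOSP_rcomp hosp, (wordAvoids_rcomp_iff hosp hval).2 hav⟩
    · rintro π1 ⟨h1, _⟩ π2 ⟨h2, _⟩ he
      have := congrArg (rcomp n) he
      rwa [rcomp_rcomp h1, rcomp_rcomp h2] at this
    · rintro τ ⟨hosp, hav⟩
      refine ⟨rcomp n τ, ⟨isOSP_rcomp hosp, ?_⟩, rcomp_rcomp hosp⟩
      have hiff := wordAvoids_rcomp_iff (n := n) (π := rcomp n τ) (α := α)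
        (isOSP_rcomp hosp) hval
      rw [rcomp_rcomp hosp] at hiff
      exact hiff.1 hav
  · intro π hosp
    refine ⟨by simp [rcomp], ?_, pdes_rcomp hosp⟩
    rw [word_rcomp n π (fun B hB a ha => (Finset.mem_Icc.1 (mem_of_osp hosp hB ha)).2)]
    exact desCount_rc n _ (fun a ha => (mem_word_le hosp ha).2)
end

section
/- Let a_n be the number of ordered set partitions of [n] that word-avoid 213 and have no min-descents (mindes = 0), with a_0 = 1. Then a_n satisfies the recurrence a_n = 3a_{n-1} - a_{n-2} for n ≥ 3, with a_1 = 1 and a_2 = 2; equivalently a_n = F_{2n-1}, a bisection of the Fibonacci numbers. -/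
/-- `aSeq n` is the number of ordered set partitions of `[n]` word-avoiding
`213` with no min-descents. -/
noncomputable def aSeq (n : ℕ) : ℕ :=
  Nat.card {π : List (Finset ℕ) // IsOSP n π ∧ Avoids213 (word π) ∧ mindes π = 0}


namespace S17aux

/-! ### Basic reformulations -/

lemma getD_word {w : List ℕ} {i : ℕ} (h : i < w.length) : w.getD i 0 = w.get ⟨i, h⟩ := by
  rw [List.getD_eq_getElem _ _ h]; simp

lemma single_sublist : ∀ (w : List ℕ) (i : ℕ), i < w.length → [w.getD i 0].Sublist w := by
  intro w
  induction w with
  | nil => intro i hi; simp at hi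
  | cons x w ih =>
    intro i hi
    cases i with
    | zero => simpa using (List.nil_sublist w).cons₂ x
    | succ i' =>
      rw [List.getD_cons_succ]
      exact (ih i' (by simpa using hi)).cons x

lemma pair_sublist : ∀ (w : List ℕ) (i j : ℕ), i < j → j < w.length →
    [w.getD i 0, w.getD j 0].Sublist w := by
  intro w
  induction w with
  | nil => intro i j _ hj; simp at hj
  | cons x w ih =>
    intro i j hij hj
    cases i with
    | zero =>
      obtain ⟨j', rfl⟩ : ∃ j', j = j' + 1 := ⟨j - 1, by omega⟩
      rw [List.getD_cons_zero, List.getD_cons_succ]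
      exact (single_sublist w j' (by simpa using hj)).cons₂ x
    | succ i' =>
      obtain ⟨j', rfl⟩ : ∃ j', j = j' + 1 := ⟨j - 1, by omega⟩
      rw [List.getD_cons_succ, List.getD_cons_succ]
      exact (ih i' j' (by omega) (by simpa using hj)).cons x

lemma triple_sublist_of_indices {w : List ℕ} {i j k : ℕ} (hij : i < j) (hjk : j < k)
    (hk : k < w.length) :
    [w.getD i 0, w.getD j 0, w.getD k 0].Sublist w := by
  induction w generalizing i j k with
  | nil => simp at hk
  | cons x w ih =>
    cases i with
    | zero =>
      obtain ⟨j', rfl⟩ : ∃ j', j = j' + 1 := ⟨j - 1, by omega⟩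
      obtain ⟨k', rfl⟩ : ∃ k', k = k' + 1 := ⟨k - 1, by omega⟩
      rw [List.getD_cons_zero, List.getD_cons_succ, List.getD_cons_succ]
      exact (pair_sublist w j' k' (by omega) (by simpa using hk)).cons₂ x
    | succ i' =>
      obtain ⟨j', rfl⟩ : ∃ j', j = j' + 1 := ⟨j - 1, by omega⟩
      obtain ⟨k', rfl⟩ : ∃ k', k = k' + 1 := ⟨k - 1, by omega⟩
      rw [List.getD_cons_succ, List.getD_cons_succ, List.getD_cons_succ]
      exact (ih (by omega) (by omega) (by simpa using hk)).cons x

lemma avoids213_iff {w : List ℕ} :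
    Avoids213 w ↔ ∀ x y z : ℕ, [x, y, z].Sublist w → y < x → x < z → False := by
  constructor
  · intro h x y z hs hyx hxz
    rw [List.sublist_iff_exists_fin_orderEmbedding_get_eq] at hs
    obtain ⟨f, hf⟩ := hs
    have e0 : (0 : ℕ) < ([x, y, z] : List ℕ).length := by norm_num
    have e1 : (1 : ℕ) < ([x, y, z] : List ℕ).length := by norm_num
    have e2 : (2 : ℕ) < ([x, y, z] : List ℕ).length := by norm_num
    have g0 : x = w.get (f ⟨0, e0⟩) := hf ⟨0, e0⟩
    have g1 : y = w.get (f ⟨1, e1⟩) := hf ⟨1, e1⟩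
    have g2 : z = w.get (f ⟨2, e2⟩) := hf ⟨2, e2⟩
    apply h
    refine ⟨(f ⟨0, e0⟩ : ℕ), (f ⟨1, e1⟩ : ℕ), (f ⟨2, e2⟩ : ℕ),
      f.strictMono (show (⟨0, e0⟩ : Fin _) < ⟨1, e1⟩ from by rw [Fin.mk_lt_mk]; omega),
      f.strictMono (show (⟨1, e1⟩ : Fin _) < ⟨2, e2⟩ from by rw [Fin.mk_lt_mk]; omega),
      (f ⟨2, e2⟩).isLt, ?_, ?_⟩
    · rw [getD_word (f ⟨1, e1⟩).isLt, getD_word (f ⟨0, e0⟩).isLt]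
      simp only [Fin.eta]
      rw [← g1, ← g0]
      exact hyx
    · rw [getD_word (f ⟨2, e2⟩).isLt, getD_word (f ⟨0, e0⟩).isLt]
      simp only [Fin.eta]
      rw [← g2, ← g0]
      exact hxz
  · intro h hpat
    obtain ⟨i, j, k, hij, hjk, hk, h1, h2⟩ := hpat
    exact h _ _ _ (triple_sublist_of_indices hij hjk hk) h1 h2

lemma avoids213_of_sublist {w w' : List ℕ} (h : w'.Sublist w) (hw : Avoids213 w) :
    Avoids213 w' := by
  rw [avoids213_iff] at *
  exact fun x y z hs => hw x y z (hs.trans h)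

lemma avoids213_append {u v : List ℕ} (hu : u.Pairwise (· < ·)) (hv : Avoids213 v)
    (hsep : ∀ x ∈ u, (∀ y ∈ v, x < y) ∨ (∀ y ∈ v, y < x)) : Avoids213 (u ++ v) := by
  rw [avoids213_iff]
  intro x y z hs hyx hxz
  rw [List.sublist_append_iff] at hs
  obtain ⟨r1, r2, heq, h1, h2⟩ := hs
  match r1, heq with
  | [], heq =>
    subst heq
    exact avoids213_iff.1 hv x y z h2 hyx hxz
  | [a1], heq =>
    simp only [List.cons_append, List.nil_append, List.cons.injEq] at heq
    obtain ⟨rfl, heq2⟩ := heq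
    subst heq2
    have hy : y ∈ v := h2.subset (by simp)
    have hz : z ∈ v := h2.subset (by simp)
    rcases hsep x (h1.subset (by simp)) with hc | hc
    · exact absurd (hc y hy) (by omega)
    · exact absurd (hc z hz) (by omega)
  | [a1, a2], heq =>
    simp only [List.cons_append, List.nil_append, List.cons.injEq] at heq
    obtain ⟨rfl, rfl, heq2⟩ := heq
    have := List.Pairwise.sublist h1 hu
    have hxy : x < y := List.rel_of_pairwise_cons this (by simp)
    omega
  | [a1, a2, a3], heq =>
    simp only [List.cons_append, List.nil_append, List.cons.injEq] at heq
    obtain ⟨rfl, rfl, rfl, heq2⟩ := heq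
    have := List.Pairwise.sublist h1 hu
    have hxy : x < y := List.rel_of_pairwise_cons this (by simp)
    omega
  | a1 :: a2 :: a3 :: a4 :: t, heq =>
    simp only [List.cons_append, List.cons.injEq] at heq
    obtain ⟨-, -, -, heq2⟩ := heq
    exact absurd heq2 (by simp)

lemma pair_sublist_of_sorted {l : List ℕ} (hl : l.Pairwise (· < ·)) {c d : ℕ}
    (hc : c ∈ l) (hd : d ∈ l) (hcd : c < d) : [c, d].Sublist l := by
  induction l with
  | nil => simp at hc
  | cons x l ih =>
    rcases List.mem_cons.1 hc with rfl | hc'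
    · rcases List.mem_cons.1 hd with rfl | hd'
      · omega
      · exact (List.singleton_sublist.2 hd').cons₂ _
    · rcases List.mem_cons.1 hd with rfl | hd'
      · exact absurd (List.rel_of_pairwise_cons hl hc') (by omega)
      · exact (ih hl.of_cons hc' hd').cons _
    
lemma mem_word {π : List (Finset ℕ)} {x : ℕ} : x ∈ word π ↔ ∃ B ∈ π, x ∈ B := by
  simp [word, List.mem_flatten]

lemma word_cons {B : Finset ℕ} {π : List (Finset ℕ)} :
    word (B :: π) = B.sort (· ≤ ·) ++ word π := rfl

lemma mem_foldr_union {π : List (Finset ℕ)} {x : ℕ} :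
    x ∈ π.foldr (· ∪ ·) ∅ ↔ ∃ B ∈ π, x ∈ B := by
  induction π with
  | nil => simp
  | cons B π ih => simp [ih]

lemma minB_eq {B : Finset ℕ} {a : ℕ} (ha : a ∈ B) (hlb : ∀ x ∈ B, a ≤ x) : minB B = a :=
  le_antisymm (Nat.sInf_le ha) (hlb _ (Nat.sInf_mem ⟨a, ha⟩))

lemma minB_mem {B : Finset ℕ} (h : B.Nonempty) : minB B ∈ B := by
  have := Nat.sInf_mem (s := (B : Set ℕ)) (by exact_mod_cast h.to_set)
  exact_mod_cast this

lemma minB_le {B : Finset ℕ} {x : ℕ} (h : x ∈ B) : minB B ≤ x := Nat.sInf_le h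

def MinChain (π : List (Finset ℕ)) : Prop := π.Chain' (fun B C => minB B ≤ minB C)

lemma mindes_eq_zero_iff {π : List (Finset ℕ)} : mindes π = 0 ↔ MinChain π := by
  rw [mindes, List.length_eq_zero_iff, List.filter_eq_nil_iff, MinChain, List.Chain', List.isChain_iff_getElem]
  constructor
  · intro h i hi
    have h2 := h i (by rw [List.mem_range]; omega)
    simp only [decide_eq_true_eq, not_lt] at h2
    rwa [List.getD_eq_getElem _ _ (by omega : i + 1 < π.length),
      List.getD_eq_getElem _ _ (by omega : i < π.length)] at h2
  · intro h i hi
    rw [List.mem_range] at hi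
    simp only [decide_eq_true_eq, not_lt]
    have h2 := h i (by omega)
    rwa [List.getD_eq_getElem _ _ (by omega : i + 1 < π.length),
      List.getD_eq_getElem _ _ (by omega : i < π.length)]

/-! ### The structural characterization -/

inductive Valid : ℕ → ℕ → List (Finset ℕ) → Prop
  | nil (a b : ℕ) (h : b < a) : Valid a b []
  | cons (a b i j : ℕ) (π : List (Finset ℕ))
      (hi : 1 ≤ i) (hij : a + i + j ≤ b + 1)
      (hj : j = 0 ∨ a + i + j ≤ b)
      (hπ : Valid (a + i) (b - j) π) :
      Valid a b ((Finset.Icc a (a + i - 1) ∪ Finset.Icc (b + 1 - j) b) :: π)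

lemma valid_subset {a b : ℕ} {π : List (Finset ℕ)} (h : Valid a b π) :
    ∀ B ∈ π, B ⊆ Finset.Icc a b := by
  induction h with
  | nil => simp
  | cons a b i j π hi hij hj hπ ih =>
    intro B hB
    rcases List.mem_cons.1 hB with rfl | hB'
    · intro x hx
      simp only [Finset.mem_union, Finset.mem_Icc] at hx
      simp only [Finset.mem_Icc]; omega
    · intro x hx
      have := ih B hB' hx
      simp only [Finset.mem_Icc] at this ⊢; omega

lemma valid_nonempty {a b : ℕ} {π : List (Finset ℕ)} (h : Valid a b π) :
    ∀ B ∈ π, B.Nonempty := by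
  induction h with
  | nil => simp
  | cons a b i j π hi hij hj hπ ih =>
    intro B hB
    rcases List.mem_cons.1 hB with rfl | hB'
    · exact ⟨a, by simp only [Finset.mem_union, Finset.mem_Icc]; omega⟩
    · exact ih B hB'

lemma valid_union {a b : ℕ} {π : List (Finset ℕ)} (h : Valid a b π) :
    π.foldr (· ∪ ·) ∅ = Finset.Icc a b := by
  induction h with
  | nil a b h => rw [List.foldr_nil, eq_comm, Finset.Icc_eq_empty]; omega
  | cons a b i j π hi hij hj hπ ih =>
    show _ ∪ _ = _
    rw [ih]
    ext x
    simp only [Finset.mem_union, Finset.mem_Icc]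
    omega

lemma valid_disjoint {a b : ℕ} {π : List (Finset ℕ)} (h : Valid a b π) :
    π.Pairwise Disjoint := by
  induction h with
  | nil => simp
  | cons a b i j π hi hij hj hπ ih =>
    refine List.pairwise_cons.2 ⟨?_, ih⟩
    intro B hB
    have hsub := valid_subset hπ B hB
    rw [Finset.disjoint_left]
    intro x hx hx'
    have h1 := hsub hx'
    simp only [Finset.mem_union, Finset.mem_Icc] at hx h1
    omega

lemma valid_minchain {a b : ℕ} {π : List (Finset ℕ)} (h : Valid a b π) : MinChain π := by
  induction h with
  | nil => exact List.isChain_nil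
  | cons a b i j π hi hij hj hπ ih =>
    rw [MinChain, List.Chain', List.isChain_cons]
    refine ⟨?_, ih⟩
    intro C hC
    have hCmem : C ∈ π := List.mem_of_mem_head? hC
    have hCne := valid_nonempty hπ C hCmem
    have hCsub := valid_subset hπ C hCmem
    have h1 : minB C ∈ C := minB_mem hCne
    have h2 := hCsub h1
    simp only [Finset.mem_Icc] at h2
    have h3 : minB (Finset.Icc a (a + i - 1) ∪ Finset.Icc (b + 1 - j) b) = a := by
      apply minB_eq
      · simp only [Finset.mem_union, Finset.mem_Icc]; omega
      · intro x hx; simp only [Finset.mem_union, Finset.mem_Icc] at hx; omega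
    omega

lemma valid_avoids {a b : ℕ} {π : List (Finset ℕ)} (h : Valid a b π) :
    Avoids213 (word π) := by
  induction h with
  | nil => rw [avoids213_iff]; intro x y z hs; simp [word] at hs
  | cons a b i j π hi hij hj hπ ih =>
    rw [word_cons]
    apply avoids213_append (Finset.sortedLT_sort _).pairwise ih
    intro x hx
    rw [Finset.mem_sort] at hx
    simp only [Finset.mem_union, Finset.mem_Icc] at hx
    have hy : ∀ y ∈ word π, a + i ≤ y ∧ y ≤ b - j := by
      intro y hy
      obtain ⟨B, hB, hyB⟩ := mem_word.1 hy
      have := valid_subset hπ B hB hyB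
      simpa [Finset.mem_Icc] using this
    rcases hx with hx | hx
    · left; intro y hy'; have := hy y hy'; omega
    · right; intro y hy'; have := hy y hy'; omega

lemma minchain_rel : ∀ (π' : List (Finset ℕ)) (B : Finset ℕ), MinChain (B :: π') →
    ∀ D ∈ π', minB B ≤ minB D := by
  intro π'
  induction π' with
  | nil => intro B _ D hD; simp at hD
  | cons E π'' ih =>
    intro B h D hD
    have h1 := (List.isChain_cons_cons.1 h).1
    rcases List.mem_cons.1 hD with rfl | hD'
    · exact h1
    · exact le_trans h1 (ih E (List.isChain_cons_cons.1 h).2 D hD')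

lemma valid_of : ∀ (π : List (Finset ℕ)) (a b : ℕ),
    (∀ B ∈ π, B.Nonempty) → π.Pairwise Disjoint →
    π.foldr (· ∪ ·) ∅ = Finset.Icc a b → Avoids213 (word π) → MinChain π →
    Valid a b π := by
  intro π
  induction π with
  | nil =>
    intro a b _ _ hU _ _
    simp only [List.foldr_nil] at hU
    refine Valid.nil a b ?_
    by_contra hab
    have h1 : a ∈ Finset.Icc a b := by simp only [Finset.mem_Icc]; omega
    rw [← hU] at h1
    simp at h1
  | cons B π' ih =>
    intro a b hne hdisj hU havoid hchain
    simp only [List.foldr_cons] at hU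
    set C := π'.foldr (· ∪ ·) ∅ with hCdef
    have hBC : Disjoint B C := by
      rw [Finset.disjoint_left]
      intro x hx hx'
      obtain ⟨B', hB', hxB'⟩ := mem_foldr_union.1 hx'
      exact (Finset.disjoint_left.1 ((List.pairwise_cons.1 hdisj).1 B' hB') hx) hxB'
    have hBsub : B ⊆ Finset.Icc a b := hU ▸ Finset.subset_union_left
    have hCsub : C ⊆ Finset.Icc a b := hU ▸ Finset.subset_union_right
    have hBne : B.Nonempty := hne B List.mem_cons_self
    have hab : a ≤ b := by
      obtain ⟨x, hx⟩ := hBne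
      have := hBsub hx; simp only [Finset.mem_Icc] at this; omega
    have hminB : minB B = a := by
      have h1 : a ∈ B ∪ C := by rw [hU]; simp only [Finset.mem_Icc]; omega
      have hlbB : ∀ x ∈ B, a ≤ x := fun x hx => by
        have := hBsub hx; simp only [Finset.mem_Icc] at this; omega
      rcases Finset.mem_union.1 h1 with h2 | h2
      · exact minB_eq h2 hlbB
      · obtain ⟨D, hD, haD⟩ := mem_foldr_union.1 h2
        have h3 : minB D ≤ a := minB_le haD
        have h4 : minB B ≤ minB D := minchain_rel _ _ hchain D hD
        have h5 : a ≤ minB B := hlbB _ (minB_mem hBne)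
        omega
    have haB : a ∈ B := hminB ▸ minB_mem hBne
    cases π' with
    | nil =>
      have hB : B = Finset.Icc a b := by
        rw [← hU]; simp [hCdef]
      have hBeq : B = Finset.Icc a (a + (b + 1 - a) - 1) ∪ Finset.Icc (b + 1 - 0) b := by
        rw [hB]; ext x; simp only [Finset.mem_union, Finset.mem_Icc]; omega
      rw [hBeq]
      exact Valid.cons a b (b + 1 - a) 0 [] (by omega) (by omega) (Or.inl rfl)
        (Valid.nil _ _ (by omega))
    | cons B₂ rest =>
      have hB₂ne : B₂.Nonempty := hne B₂ (by simp)
      have hCne' : C.Nonempty := by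
        obtain ⟨x, hx⟩ := hB₂ne
        exact ⟨x, mem_foldr_union.2 ⟨B₂, by simp, hx⟩⟩
      set c := C.min' hCne' with hc
      set d := C.max' hCne' with hd
      have hcC : c ∈ C := C.min'_mem _
      have hdC : d ∈ C := C.max'_mem _
      have hcd : c ≤ d := C.min'_le _ hdC
      have hcab : a ≤ c ∧ c ≤ b := by
        have := hCsub hcC; simpa only [Finset.mem_Icc] using this
      have hdab : d ≤ b := by
        have := hCsub hdC; simp only [Finset.mem_Icc] at this; omega
      have haC : a ∉ C := Finset.disjoint_left.1 hBC haB
      have hac : a < c := by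
        rcases Nat.lt_or_ge a c with h | h
        · exact h
        · exfalso; have : a = c := by omega
          exact haC (this ▸ hcC)
      have hcB₂ : c ∈ B₂ := by
        obtain ⟨D, hD, hcD⟩ := mem_foldr_union.1 hcC
        have h4 : minB B₂ ≤ minB D := by
          rcases List.mem_cons.1 hD with rfl | hD'
          · exact le_refl _
          · exact minchain_rel rest B₂ (List.isChain_cons_cons.1 hchain).2 D hD'
        have h5 : minB B₂ ∈ C := mem_foldr_union.2 ⟨B₂, by simp, minB_mem hB₂ne⟩
        have h6 : c ≤ minB B₂ := C.min'_le _ h5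
        have h7 : minB D ≤ c := minB_le hcD
        have h8 : minB B₂ = c := by omega
        exact h8 ▸ minB_mem hB₂ne
      have hkey : ∀ e ∈ B, e < c ∨ d < e := by
        intro e heB
        by_contra hcon
        push_neg at hcon
        obtain ⟨h1, h2⟩ := hcon
        have heC : e ∉ C := Finset.disjoint_left.1 hBC heB
        have hec : e ≠ c := fun h => heC (h ▸ hcC)
        have hed : e ≠ d := fun h => heC (h ▸ hdC)
        have hsub1 : [e].Sublist (B.sort (· ≤ ·)) :=
          List.singleton_sublist.2 ((Finset.mem_sort _).2 heB)
        have hsub2 : [c, d].Sublist (word (B₂ :: rest)) := by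
          rw [word_cons]
          rcases mem_foldr_union.1 hdC with ⟨D, hD, hdD⟩
          rcases List.mem_cons.1 hD with rfl | hD'
          · exact (pair_sublist_of_sorted (Finset.sortedLT_sort D).pairwise
              ((Finset.mem_sort _).2 hcB₂) ((Finset.mem_sort _).2 hdD) (by omega)).trans
              (List.sublist_append_left _ _)
          · exact List.Sublist.append (List.singleton_sublist.2 ((Finset.mem_sort _).2 hcB₂))
              (List.singleton_sublist.2 (mem_word.2 ⟨D, hD', hdD⟩))
        have hsub : [e, c, d].Sublist (word (B :: B₂ :: rest)) := by
          rw [word_cons]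
          exact List.Sublist.append hsub1 hsub2
        exact avoids213_iff.1 havoid e c d hsub (by omega) (by omega)
      have hCIcc : C = Finset.Icc c d := by
        ext x
        simp only [Finset.mem_Icc]
        constructor
        · intro hx
          exact ⟨C.min'_le _ hx, C.le_max' _ hx⟩
        · intro hx
          have hxab : x ∈ Finset.Icc a b := by simp only [Finset.mem_Icc]; omega
          rw [← hU] at hxab
          rcases Finset.mem_union.1 hxab with h | h
          · have := hkey x h; omega
          · exact h
      have hBeq : B = Finset.Icc a (a + (c - a) - 1) ∪ Finset.Icc (b + 1 - (b - d)) b := by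
        ext x
        simp only [Finset.mem_union, Finset.mem_Icc]
        constructor
        · intro hx
          have h1 := hBsub hx
          have h2 := hkey x hx
          simp only [Finset.mem_Icc] at h1
          omega
        · intro hx
          have hxab : x ∈ Finset.Icc a b := by simp only [Finset.mem_Icc]; omega
          rw [← hU] at hxab
          rcases Finset.mem_union.1 hxab with h | h
          · exact h
          · rw [hCIcc] at h; simp only [Finset.mem_Icc] at h; omega
      have htail : Valid (a + (c - a)) (b - (b - d)) (B₂ :: rest) := by
        have hca : a + (c - a) = c := by omega
        have hdb : b - (b - d) = d := by omega
        rw [hca, hdb]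
        refine ih c d (fun D hD => hne D (by simp [hD])) (List.pairwise_cons.1 hdisj).2
          ?_ ?_ (List.isChain_cons_cons.1 hchain).2
        · exact hCIcc
        · exact avoids213_of_sublist
            (by rw [word_cons]; exact List.sublist_append_right _ _) havoid
      rw [hBeq]
      exact Valid.cons a b (c - a) (b - d) _ (by omega) (by omega) (by omega) htail

/-! ### Fibonacci values and counting -/

def A : ℕ → ℕ
  | 0 => 1
  | (m + 1) => Nat.fib (2 * m + 1)

def Cset (s : ℕ) : Finset (ℕ × ℕ) :=
  (Finset.range (s + 1) ×ˢ Finset.range (s + 1)).filter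
    (fun p => 1 ≤ p.1 ∧ p.1 + p.2 ≤ s ∧ (p.2 = 0 ∨ p.1 + p.2 + 1 ≤ s))

lemma mem_Cset {s : ℕ} {p : ℕ × ℕ} :
    p ∈ Cset s ↔ 1 ≤ p.1 ∧ p.1 + p.2 ≤ s ∧ (p.2 = 0 ∨ p.1 + p.2 + 1 ≤ s) := by
  simp only [Cset, Finset.mem_filter, Finset.mem_product, Finset.mem_range]
  constructor
  · tauto
  · intro h; exact ⟨⟨by omega, by omega⟩, h⟩

lemma sum_A_range1 : ∀ t : ℕ, ∑ m ∈ Finset.range t, A (m + 1) = Nat.fib (2 * t) := by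
  intro t
  induction t with
  | zero => simp
  | succ t ih =>
    rw [Finset.sum_range_succ, ih]
    have e0 : A (t + 1) = Nat.fib (2 * t + 1) := rfl
    have e1 : 2 * (t + 1) = 2 * t + 2 := by ring
    rw [e0, e1, Nat.fib_add_two]

lemma sum_fib_even_range : ∀ k : ℕ,
    (∑ t ∈ Finset.range k, Nat.fib (2 * (t + 1))) + 1 = Nat.fib (2 * k + 1) := by
  intro k
  induction k with
  | zero => simp
  | succ k ih =>
    rw [Finset.sum_range_succ]
    have e1 : 2 * (k + 1) = 2 * k + 2 := by ring
    rw [e1]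
    have h1 : Nat.fib (2 * k + 2 + 1) = Nat.fib (2 * k + 1) + Nat.fib (2 * k + 2) := by
      rw [show 2 * k + 2 + 1 = 2 * k + 1 + 2 by omega, Nat.fib_add_two,
        show 2 * k + 1 + 1 = 2 * k + 2 by omega]
    omega

lemma Cset_eq {s : ℕ} (hs : 1 ≤ s) : Cset s =
    ((Finset.range s).image fun m => (m + 1, 0)) ∪
      ((Finset.range (s - 2)).biUnion fun i =>
        (Finset.range (s - 2 - i)).image fun j => (i + 1, j + 1)) := by
  ext ⟨i, j⟩
  simp only [mem_Cset, Finset.mem_union, Finset.mem_image, Finset.mem_biUnion,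
    Finset.mem_range, Prod.mk.injEq]
  constructor
  · rintro ⟨h1, h2, h3⟩
    rcases Nat.eq_zero_or_pos j with rfl | hj
    · exact Or.inl ⟨i - 1, by omega, by omega, rfl⟩
    · exact Or.inr ⟨i - 1, by omega, j - 1, by omega, by omega, by omega⟩
  · rintro (⟨m, hm, rfl, rfl⟩ | ⟨m, hm, j', hj', rfl, rfl⟩) <;>
      refine ⟨by omega, by omega, by omega⟩

lemma sum_Cset {s : ℕ} (hs : 1 ≤ s) : ∑ p ∈ Cset s, A (s - p.1 - p.2) = A s := by
  obtain ⟨t, rfl⟩ : ∃ t, s = t + 1 := ⟨s - 1, by omega⟩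
  have hdisj : Disjoint ((Finset.range (t + 1)).image fun m => (m + 1, 0))
      ((Finset.range (t + 1 - 2)).biUnion fun i =>
        (Finset.range (t + 1 - 2 - i)).image fun j => (i + 1, j + 1)) := by
    rw [Finset.disjoint_left]
    rintro ⟨i, j⟩ h1 h2
    simp only [Finset.mem_image, Finset.mem_biUnion, Finset.mem_range, Prod.mk.injEq] at h1 h2
    obtain ⟨m, _, _, hj0⟩ := h1
    obtain ⟨m', _, j', _, _, hj1⟩ := h2
    omega
  rw [Cset_eq hs, Finset.sum_union hdisj]
  have hS1 : (∑ p ∈ (Finset.range (t + 1)).image (fun m => (m + 1, 0)),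
      A (t + 1 - p.1 - p.2)) = Nat.fib (2 * t) + 1 := by
    rw [Finset.sum_image (by intro x _ y _ h; simp only [Prod.mk.injEq] at h; omega)]
    calc ∑ m ∈ Finset.range (t + 1), A (t + 1 - (m + 1) - 0)
        = ∑ m ∈ Finset.range (t + 1), A (t + 1 - 1 - m) := by
          refine Finset.sum_congr rfl fun m hm => ?_
          congr 1
          omega
      _ = ∑ m ∈ Finset.range (t + 1), A m := Finset.sum_range_reflect A (t + 1)
      _ = (∑ i ∈ Finset.range t, A (i + 1)) + A 0 := Finset.sum_range_succ' A t
      _ = Nat.fib (2 * t) + 1 := by rw [sum_A_range1]; rfl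
  have hpws : (↑(Finset.range (t + 1 - 2)) : Set ℕ).PairwiseDisjoint
      (fun i => (Finset.range (t + 1 - 2 - i)).image fun j => (i + 1, j + 1)) := by
    intro x _ y _ hxy
    simp only [Function.onFun]
    rw [Finset.disjoint_left]
    rintro ⟨p, q⟩ hp hq
    simp only [Finset.mem_image, Finset.mem_range, Prod.mk.injEq] at hp hq
    obtain ⟨j, _, hj1, hj2⟩ := hp
    obtain ⟨j', _, hj1', hj2'⟩ := hq
    omega
  have hS2 : (∑ p ∈ (Finset.range (t + 1 - 2)).biUnion (fun i =>
      (Finset.range (t + 1 - 2 - i)).image fun j => (i + 1, j + 1)),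
      A (t + 1 - p.1 - p.2)) + 1 = Nat.fib (2 * (t - 1) + 1) := by
    rw [Finset.sum_biUnion hpws]
    have hinner : ∀ i ∈ Finset.range (t + 1 - 2),
        (∑ p ∈ (Finset.range (t + 1 - 2 - i)).image (fun j => (i + 1, j + 1)),
          A (t + 1 - p.1 - p.2)) = Nat.fib (2 * (t - 1 - i)) := by
      intro i hi
      rw [Finset.sum_image (by intro x _ y _ h; simp only [Prod.mk.injEq] at h; omega)]
      calc ∑ j ∈ Finset.range (t + 1 - 2 - i), A (t + 1 - (i + 1) - (j + 1))
          = ∑ j ∈ Finset.range (t - 1 - i), A (t - 1 - i - 1 - j + 1) := by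
            refine Finset.sum_congr
              (by rw [show t + 1 - 2 - i = t - 1 - i by omega]) fun j hj => ?_
            rw [Finset.mem_range] at hj
            congr 1
            omega
        _ = ∑ j ∈ Finset.range (t - 1 - i), A (j + 1) :=
            Finset.sum_range_reflect (fun m => A (m + 1)) (t - 1 - i)
        _ = Nat.fib (2 * (t - 1 - i)) := sum_A_range1 _
    rw [Finset.sum_congr rfl hinner]
    calc (∑ i ∈ Finset.range (t + 1 - 2), Nat.fib (2 * (t - 1 - i))) + 1
        = (∑ i ∈ Finset.range (t - 1), Nat.fib (2 * (t - 1 - 1 - i + 1))) + 1 := by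
          refine congrArg (· + 1) (Finset.sum_congr
            (by rw [show t + 1 - 2 = t - 1 by omega]) fun i hi => ?_)
          rw [Finset.mem_range] at hi
          congr 1
          omega
      _ = (∑ i ∈ Finset.range (t - 1), Nat.fib (2 * (i + 1))) + 1 := by
          rw [Finset.sum_range_reflect (fun m => Nat.fib (2 * (m + 1))) (t - 1)]
      _ = Nat.fib (2 * (t - 1) + 1) := sum_fib_even_range _
  rw [hS1]
  rcases Nat.eq_zero_or_pos t with rfl | ht
  · have e : Nat.fib (2 * (0 - 1) + 1) = 1 := by norm_num
    rw [e] at hS2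
    have e2 : A (0 + 1) = 1 := rfl
    have e3 : Nat.fib (2 * 0) = 0 := by norm_num
    rw [e2, e3]
    omega
  · obtain ⟨t', rfl⟩ : ∃ t', t = t' + 1 := ⟨t - 1, by omega⟩
    have e1 : 2 * (t' + 1 - 1) + 1 = 2 * t' + 1 := by omega
    rw [e1] at hS2
    have e2 : A (t' + 1 + 1) = Nat.fib (2 * (t' + 1) + 1) := rfl
    rw [e2, show 2 * (t' + 1) + 1 = 2 * t' + 3 by omega, show 2 * (t' + 1) = 2 * t' + 2 by omega]
    have h1 : Nat.fib (2 * t' + 3) = Nat.fib (2 * t' + 1) + Nat.fib (2 * t' + 2) := by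
      rw [show 2 * t' + 3 = 2 * t' + 1 + 2 by omega, Nat.fib_add_two,
        show 2 * t' + 1 + 1 = 2 * t' + 2 by omega]
    have h2 : Nat.fib (2 * t' + 2) = Nat.fib (2 * t') + Nat.fib (2 * t' + 1) :=
      Nat.fib_add_two
    omega

lemma block_inj {a b i j i' j' : ℕ}
    (hi : 1 ≤ i) (hij : a + i + j ≤ b + 1) (hj : j = 0 ∨ a + i + j ≤ b)
    (hi' : 1 ≤ i') (hij' : a + i' + j' ≤ b + 1) (hj' : j' = 0 ∨ a + i' + j' ≤ b)
    (heq : Finset.Icc a (a + i - 1) ∪ Finset.Icc (b + 1 - j) b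
         = Finset.Icc a (a + i' - 1) ∪ Finset.Icc (b + 1 - j') b) :
    i = i' ∧ j = j' := by
  have hmem : ∀ x, ((a ≤ x ∧ x ≤ a + i - 1) ∨ (b + 1 - j ≤ x ∧ x ≤ b)) ↔
      ((a ≤ x ∧ x ≤ a + i' - 1) ∨ (b + 1 - j' ≤ x ∧ x ≤ b)) := by
    intro x
    have := Finset.ext_iff.1 heq x
    simpa only [Finset.mem_union, Finset.mem_Icc] using this
  have hii' : i = i' := by
    by_contra hne
    rcases Nat.lt_or_ge i i' with h | h
    · have := (hmem (a + i)).2 (Or.inl ⟨by omega, by omega⟩)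
      omega
    · have hlt : i' < i := by omega
      have := (hmem (a + i')).1 (Or.inl ⟨by omega, by omega⟩)
      omega
  subst hii'
  refine ⟨rfl, ?_⟩
  by_contra hne
  rcases Nat.lt_or_ge j j' with h | h
  · have := (hmem (b + 1 - j')).2 (Or.inr ⟨le_refl _, by omega⟩)
    omega
  · have hlt : j' < j := by omega
    have := (hmem (b + 1 - j)).1 (Or.inr ⟨le_refl _, by omega⟩)
    omega

lemma valid_zero_iff {a b : ℕ} (h : b < a) {π : List (Finset ℕ)} :
    Valid a b π ↔ π = [] := by
  constructor
  · intro hv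
    cases hv with
    | nil => rfl
    | cons a b i j π hi hij hj hπ => omega
  · rintro rfl
    exact Valid.nil a b h

lemma card_valid : ∀ (s a b : ℕ), b + 1 = a + s →
    Nat.card {π : List (Finset ℕ) // Valid a b π} = A s ∧
      Finite {π : List (Finset ℕ) // Valid a b π} := by
  intro s
  induction s using Nat.strong_induction_on with
  | _ s IH =>
    intro a b hs
    rcases Nat.eq_zero_or_pos s with rfl | hspos
    · have hba : b < a := by omega
      haveI : Unique {π : List (Finset ℕ) // Valid a b π} :=
        { default := ⟨[], Valid.nil a b hba⟩
          uniq := fun ⟨π, h⟩ => Subtype.ext ((valid_zero_iff hba).1 h) }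
      refine ⟨?_, inferInstance⟩
      rw [Nat.card_unique]; rfl
    · have hab : a ≤ b := by omega
      have hfib : ∀ p : ℕ × ℕ, p ∈ Cset s →
          Nat.card {π : List (Finset ℕ) // Valid (a + p.1) (b - p.2) π} = A (s - p.1 - p.2) ∧
            Finite {π : List (Finset ℕ) // Valid (a + p.1) (b - p.2) π} := by
        intro p hp
        rw [mem_Cset] at hp
        exact IH (s - p.1 - p.2) (by omega) _ _ (by omega)
      haveI hfin : ∀ p : {q : ℕ × ℕ // q ∈ Cset s},
          Finite {π : List (Finset ℕ) // Valid (a + p.1.1) (b - p.1.2) π} :=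
        fun p => (hfib p.1 p.2).2
      set F : (Σ p : {q : ℕ × ℕ // q ∈ Cset s},
          {π : List (Finset ℕ) // Valid (a + p.1.1) (b - p.1.2) π}) →
          {π : List (Finset ℕ) // Valid a b π} :=
        fun x => ⟨(Finset.Icc a (a + x.1.1.1 - 1) ∪ Finset.Icc (b + 1 - x.1.1.2) b) :: x.2.1,
          Valid.cons a b x.1.1.1 x.1.1.2 x.2.1
            (by have := mem_Cset.1 x.1.2; omega)
            (by have := mem_Cset.1 x.1.2; omega)
            (by have := mem_Cset.1 x.1.2; omega)
            x.2.2⟩ with hF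
      have hinj : Function.Injective F := by
        rintro ⟨⟨⟨i, j⟩, hp⟩, ⟨π₁, h₁⟩⟩ ⟨⟨⟨i', j'⟩, hp'⟩, ⟨π₂, h₂⟩⟩ hxy
        simp only [hF, Subtype.mk.injEq, List.cons.injEq] at hxy
        obtain ⟨hblock, htail⟩ := hxy
        have hm := mem_Cset.1 hp
        have hm' := mem_Cset.1 hp'
        obtain ⟨rfl, rfl⟩ := block_inj (by omega) (by omega) (by omega)
          (by omega) (by omega) (by omega) hblock
        subst htail
        rfl
      have hsurj : Function.Surjective F := by
        rintro ⟨π, h⟩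
        cases h with
        | nil h => omega
        | cons a b i j π' hi hij hj hπ =>
          exact ⟨⟨⟨(i, j), mem_Cset.2 ⟨hi, by omega, by omega⟩⟩, ⟨π', hπ⟩⟩, rfl⟩
      haveI : Finite (Σ p : {q : ℕ × ℕ // q ∈ Cset s},
          {π : List (Finset ℕ) // Valid (a + p.1.1) (b - p.1.2) π}) := by
        infer_instance
      refine ⟨?_, Finite.of_surjective F hsurj⟩
      rw [← Nat.card_eq_of_bijective F ⟨hinj, hsurj⟩]
      letI : ∀ p : {q : ℕ × ℕ // q ∈ Cset s},
          Fintype {π : List (Finset ℕ) // Valid (a + p.1.1) (b - p.1.2) π} :=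
        fun p => Fintype.ofFinite _
      rw [Nat.card_eq_fintype_card, Fintype.card_sigma]
      have hterm : ∀ p : {q : ℕ × ℕ // q ∈ Cset s},
          Fintype.card {π : List (Finset ℕ) // Valid (a + p.1.1) (b - p.1.2) π}
            = A (s - p.1.1 - p.1.2) := by
        intro p
        rw [← Nat.card_eq_fintype_card]
        exact (hfib p.1 p.2).1
      rw [Finset.sum_congr rfl (fun p _ => hterm p)]
      rw [← sum_Cset hspos, Finset.univ_eq_attach]
      exact Finset.sum_attach (Cset s) (fun p => A (s - p.1 - p.2))

lemma aSeq_eq_A (n : ℕ) : aSeq n = A n := by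
  have hiff : ∀ π : List (Finset ℕ),
      (IsOSP n π ∧ Avoids213 (word π) ∧ mindes π = 0) ↔ Valid 1 n π := by
    intro π
    constructor
    · rintro ⟨⟨h1, h2, h3⟩, h4, h5⟩
      exact valid_of π 1 n h1 h2 h3 h4 (mindes_eq_zero_iff.1 h5)
    · intro h
      exact ⟨⟨valid_nonempty h, valid_disjoint h, valid_union h⟩, valid_avoids h,
        mindes_eq_zero_iff.2 (valid_minchain h)⟩
  have := (card_valid n 1 n (by omega)).1
  rw [aSeq, Nat.card_congr (Equiv.subtypeEquivRight hiff), this]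

end S17aux

theorem stmt17 :
    aSeq 1 = 1 ∧ aSeq 2 = 2 ∧
    (∀ n : ℕ, 3 ≤ n → aSeq n = 3 * aSeq (n - 1) - aSeq (n - 2)) ∧
    (∀ n : ℕ, 1 ≤ n → aSeq n = Nat.fib (2 * n - 1)) := by
  refine ⟨by rw [S17aux.aSeq_eq_A]; rfl, by rw [S17aux.aSeq_eq_A]; rfl, ?_, ?_⟩
  · intro n hn
    obtain ⟨k, rfl⟩ : ∃ k, n = k + 3 := ⟨n - 3, by omega⟩
    rw [S17aux.aSeq_eq_A, show k + 3 - 1 = k + 2 by omega, show k + 3 - 2 = k + 1 by omega,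
      S17aux.aSeq_eq_A, S17aux.aSeq_eq_A]
    have e1 : S17aux.A (k + 3) = Nat.fib (2 * (k + 2) + 1) := rfl
    have e2 : S17aux.A (k + 2) = Nat.fib (2 * (k + 1) + 1) := rfl
    have e3 : S17aux.A (k + 1) = Nat.fib (2 * k + 1) := rfl
    rw [e1, e2, e3, show 2 * (k + 2) + 1 = 2 * k + 5 by ring,
      show 2 * (k + 1) + 1 = 2 * k + 3 by ring]
    have f1 : Nat.fib (2 * k + 5) = Nat.fib (2 * k + 3) + Nat.fib (2 * k + 4) := by
      rw [show 2 * k + 5 = 2 * k + 3 + 2 by omega, Nat.fib_add_two,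
        show 2 * k + 3 + 1 = 2 * k + 4 by omega]
    have f2 : Nat.fib (2 * k + 4) = Nat.fib (2 * k + 2) + Nat.fib (2 * k + 3) := by
      rw [show 2 * k + 4 = 2 * k + 2 + 2 by omega, Nat.fib_add_two,
        show 2 * k + 2 + 1 = 2 * k + 3 by omega]
    have f3 : Nat.fib (2 * k + 3) = Nat.fib (2 * k + 1) + Nat.fib (2 * k + 2) := by
      rw [show 2 * k + 3 = 2 * k + 1 + 2 by omega, Nat.fib_add_two,
        show 2 * k + 1 + 1 = 2 * k + 2 by omega]
    omega
  · intro n hn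
    obtain ⟨k, rfl⟩ : ∃ k, n = k + 1 := ⟨n - 1, by omega⟩
    rw [S17aux.aSeq_eq_A]
    have e : S17aux.A (k + 1) = Nat.fib (2 * k + 1) := rfl
    rw [e, show 2 * (k + 1) - 1 = 2 * k + 1 by omega]
end
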